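/- Double robustness of the oracle ensemble, outcome case (second claim of the paper's double-robustness lemma for the treatment-specific mean): if the true outcome regression Q₀ admits a σ(T∘W)-measurable version (i.e., there is a measurable q₀ : ℝ^J → ℝ with Q₀ = q₀∘T∘W P-a.s.) and G_T ≥ δ P-a.s., then Q_T = Q₀ P-a.s., and consequently Ψ(Q_T) = Ψ(Q₀); that is, including the correct outcome model in the coordinate transformation makes the oracle ensemble equal the true function. -/

import Mathlib

open MeasureTheory

lemma integrable_of_bdd' {Ω : Type*} {mΩ : MeasurableSpace Ω} (P : Measure Ω) [IsFiniteMeasure P]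
    {f : Ω → ℝ} (hf : Measurable f) {C : ℝ} (hC : ∀ ω, |f ω| ≤ C) : Integrable f P :=
  ⟨hf.aestronglyMeasurable, HasFiniteIntegral.of_bounded (ae_of_all _ fun ω => by
    simpa using hC ω)⟩


lemma setIntegral_const_le_bound {Ω : Type*} {mΩ : MeasurableSpace Ω} (P : Measure Ω)
    [IsFiniteMeasure P] {g : Ω → ℝ} (hg : Integrable g P) (s : Set Ω) {δ : ℝ}
    (h : ∀ᵐ ω ∂P, δ ≤ g ω) : δ * (P s).toReal ≤ ∫ ω in s, g ω ∂P := by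
  have hmono := integral_mono_ae (integrable_const δ) (hg.restrict (s := s))
    (ae_restrict_of_ae h)
  rwa [setIntegral_const, smul_eq_mul, mul_comm] at hmono

lemma aux_dr {Ω : Type*} [mΩ : MeasurableSpace Ω] (P : Measure Ω) [IsProbabilityMeasure P]
    (m : MeasurableSpace Ω) (hm : m ≤ mΩ)
    (A Y Q₀ QT Q₀' GT : Ω → ℝ)
    (hA : Measurable[mΩ] A) (hY : Measurable[mΩ] Y)
    (hAbin : ∀ ω, A ω = 0 ∨ A ω = 1)
    (hYrange : ∀ ω, Y ω ∈ Set.Icc (0:ℝ) 1)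
    (hQ₀range : ∀ ω, Q₀ ω ∈ Set.Icc (0:ℝ) 1)
    (hQTrange : ∀ ω, QT ω ∈ Set.Icc (0:ℝ) 1)
    (hQ₀'measm : Measurable[m] Q₀')
    (hQ₀'range : ∀ ω, Q₀' ω ∈ Set.Icc (0:ℝ) 1)
    (hQ₀'ae : Q₀' =ᵐ[P] Q₀)
    (hQ₀meas : Measurable[mΩ] Q₀)
    (hQTmeas : Measurable[m] QT)
    (hQ₀orth : ∀ f : Ω → ℝ, Measurable[m] f → (∃ C : ℝ, ∀ ω, |f ω| ≤ C) →
      ∫ ω, A ω * (Y ω - Q₀ ω) * f ω ∂P = 0)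
    (hQTorth : ∀ f : Ω → ℝ, Measurable[m] f → (∃ C : ℝ, ∀ ω, |f ω| ≤ C) →
      ∫ ω, A ω * (Y ω - QT ω) * f ω ∂P = 0)
    (hGT : GT =ᵐ[P] P[A|m])
    (δ : ℝ) (hδpos : 0 < δ)
    (hGTpos : ∀ᵐ ω ∂P, δ ≤ GT ω) :
    QT =ᵐ[P] Q₀ := by
  set f : Ω → ℝ := fun ω => QT ω - Q₀' ω with hf_def
  have hfm : Measurable[m] f := hQTmeas.sub hQ₀'measm
  have hfbd : ∀ ω, |f ω| ≤ 1 := fun ω => by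
    have h1 := hQTrange ω; have h2 := hQ₀'range ω
    rw [abs_sub_le_iff]
    constructor <;> linarith [h1.1, h1.2, h2.1, h2.2]
  have hfmeas : Measurable[mΩ] f := hfm.mono hm le_rfl
  have hQTm : Measurable[mΩ] QT := hQTmeas.mono hm le_rfl
  have hO1 := hQTorth f hfm ⟨1, hfbd⟩
  have hO2 := hQ₀orth f hfm ⟨1, hfbd⟩
  have hAbd : ∀ ω, |A ω| ≤ 1 := fun ω => by rcases hAbin ω with h | h <;> simp [h]
  have hint1 : Integrable (fun ω => A ω * (Y ω - QT ω) * f ω) P := by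
    apply integrable_of_bdd' P ((hA.mul (hY.sub hQTm)).mul hfmeas) (C := 1)
    intro ω
    have h1 := hYrange ω; have h2 := hQTrange ω
    have hd : |Y ω - QT ω| ≤ 1 := by
      rw [abs_sub_le_iff]; constructor <;> linarith [h1.1, h1.2, h2.1, h2.2]
    calc |A ω * (Y ω - QT ω) * f ω| = |A ω| * |Y ω - QT ω| * |f ω| := by
          rw [abs_mul, abs_mul]
      _ ≤ 1 := mul_le_one₀ (mul_le_one₀ (hAbd ω) (abs_nonneg _) hd) (abs_nonneg _) (hfbd ω)
  have hint2 : Integrable (fun ω => A ω * (Y ω - Q₀ ω) * f ω) P := by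
    apply integrable_of_bdd' P ((hA.mul (hY.sub hQ₀meas)).mul hfmeas) (C := 1)
    intro ω
    have h1 := hYrange ω; have h2 := hQ₀range ω
    have hd : |Y ω - Q₀ ω| ≤ 1 := by
      rw [abs_sub_le_iff]; constructor <;> linarith [h1.1, h1.2, h2.1, h2.2]
    calc |A ω * (Y ω - Q₀ ω) * f ω| = |A ω| * |Y ω - Q₀ ω| * |f ω| := by
          rw [abs_mul, abs_mul]
      _ ≤ 1 := mul_le_one₀ (mul_le_one₀ (hAbd ω) (abs_nonneg _) hd) (abs_nonneg _) (hfbd ω)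
  have hdiff : ∫ ω, (A ω * (Y ω - Q₀ ω) * f ω - A ω * (Y ω - QT ω) * f ω) ∂P = 0 := by
    rw [integral_sub hint2 hint1, hO1, hO2, sub_zero]
  have hAf2 : ∫ ω, A ω * f ω ^ 2 ∂P = 0 := by
    have hcongr : (fun ω => A ω * (Y ω - Q₀ ω) * f ω - A ω * (Y ω - QT ω) * f ω)
        =ᵐ[P] fun ω => A ω * f ω ^ 2 := by
      filter_upwards [hQ₀'ae] with ω hω
      simp only [hf_def, ← hω]; ring
    rw [← integral_congr_ae hcongr, hdiff]
  have hAf2int : Integrable (fun ω => A ω * f ω ^ 2) P := by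
    apply integrable_of_bdd' P (hA.mul (hfmeas.pow measurable_const)) (C := 1)
    intro ω
    calc |A ω * f ω ^ 2| = |A ω| * |f ω| ^ 2 := by rw [abs_mul, abs_pow]
      _ ≤ 1 := mul_le_one₀ (hAbd ω) (by positivity) (pow_le_one₀ (abs_nonneg _) (hfbd ω))
  have hAf2zero : (fun ω => A ω * f ω ^ 2) =ᵐ[P] 0 := by
    refine (integral_eq_zero_iff_of_nonneg_ae ?_ hAf2int).mp hAf2
    exact ae_of_all _ fun ω => by rcases hAbin ω with h | h <;> simp [h] <;> positivity
  set s : Set Ω := {ω | f ω ≠ 0} with hs_def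
  have hsm : MeasurableSet[m] s := (hfm (measurableSet_singleton 0)).compl
  have hsmeas : MeasurableSet[mΩ] s := hm s hsm
  have hAint : Integrable A P := integrable_of_bdd' P hA hAbd
  have hsetA : ∫ ω in s, A ω ∂P = 0 := by
    have hres : ∀ᵐ ω ∂(P.restrict s), A ω = 0 := by
      refine (ae_restrict_iff' hsmeas).mpr ?_
      filter_upwards [hAf2zero] with ω hω hωs
      have hmul : A ω * f ω ^ 2 = 0 := hω
      rcases mul_eq_zero.mp hmul with h | h
      · exact h
      · exact absurd (pow_eq_zero_iff (by norm_num) |>.mp h) hωs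
    calc ∫ ω in s, A ω ∂P = ∫ _ω in s, (0:ℝ) ∂P := integral_congr_ae hres
      _ = 0 := by simp
  have hGTint : Integrable GT P := (integrable_condExp (m := m)).congr hGT.symm
  have hsetGT : ∫ ω in s, GT ω ∂P = 0 := by
    rw [integral_congr_ae (ae_restrict_of_ae hGT), setIntegral_condExp hm hAint hsm, hsetA]
  have hPs : P s = 0 := by
    by_contra hne
    have hpos : 0 < (P s).toReal := ENNReal.toReal_pos hne (measure_ne_top P s)
    have hlow : δ * (P s).toReal ≤ ∫ ω in s, GT ω ∂P :=
      setIntegral_const_le_bound P hGTint s hGTpos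
    rw [hsetGT] at hlow
    nlinarith
  have hf0 : f =ᵐ[P] 0 := by
    rw [Filter.EventuallyEq, ae_iff]
    convert hPs using 2
    rfl
  filter_upwards [hf0, hQ₀'ae] with ω h1 h2
  have hsub : QT ω - Q₀' ω = 0 := h1
  have : Q₀' ω = Q₀ ω := h2
  linarith

/-- Double robustness of the oracle ensemble, outcome case: if the true outcome
regression `Q₀` admits a σ(T∘W)-measurable version and `G_T ≥ δ` a.s., then
`Q_T = Q₀` P-a.s., and consequently `Ψ(Q_T) = Ψ(Q₀)`. -/
theorem stmt_11
    {Ω 𝒲 : Type*} [MeasurableSpace Ω] [MeasurableSpace 𝒲]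
    (P : Measure Ω) [IsProbabilityMeasure P]
    (W : Ω → 𝒲) (A Y Q₀ : Ω → ℝ)
    (hW : Measurable W) (hA : Measurable A) (hY : Measurable Y)
    (hAbin : ∀ ω, A ω = 0 ∨ A ω = 1)
    (hYrange : ∀ ω, Y ω ∈ Set.Icc (0:ℝ) 1)
    (hQ₀meas : Measurable[MeasurableSpace.comap W inferInstance] Q₀)
    (hQ₀range : ∀ ω, Q₀ ω ∈ Set.Icc (0:ℝ) 1)
    (hQ₀orth : ∀ f : Ω → ℝ, Measurable[MeasurableSpace.comap W inferInstance] f →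
      (∃ C : ℝ, ∀ ω, |f ω| ≤ C) →
      ∫ ω, A ω * (Y ω - Q₀ ω) * f ω ∂P = 0)
    {J : ℕ} (T : 𝒲 → (Fin J → ℝ)) (hT : Measurable T)
    (QT : Ω → ℝ)
    (hQTmeas : Measurable[MeasurableSpace.comap (fun ω => T (W ω)) inferInstance] QT)
    (hQTrange : ∀ ω, QT ω ∈ Set.Icc (0:ℝ) 1)
    (hQTorth : ∀ f : Ω → ℝ,
      Measurable[MeasurableSpace.comap (fun ω => T (W ω)) inferInstance] f →
      (∃ C : ℝ, ∀ ω, |f ω| ≤ C) →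
      ∫ ω, A ω * (Y ω - QT ω) * f ω ∂P = 0)
    (GT : Ω → ℝ)
    (hGT : GT =ᵐ[P] P[A|MeasurableSpace.comap (fun ω => T (W ω)) inferInstance])
    (δ : ℝ) (hδ : δ ∈ Set.Ioo (0:ℝ) 1)
    (hGTpos : ∀ᵐ ω ∂P, δ ≤ GT ω)
    (hq₀ : ∃ q₀ : (Fin J → ℝ) → ℝ, Measurable q₀ ∧
      Q₀ =ᵐ[P] fun ω => q₀ (T (W ω))) :
    QT =ᵐ[P] Q₀ ∧ ∫ ω, QT ω ∂P = ∫ ω, Q₀ ω ∂P := by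
  obtain ⟨q₀, hq₀m, hq₀eq⟩ := hq₀
  have hm : MeasurableSpace.comap (fun ω => T (W ω)) inferInstance
      ≤ (inferInstance : MeasurableSpace Ω) := (hT.comp hW).comap_le
  have hmW : MeasurableSpace.comap (fun ω => T (W ω)) inferInstance
      ≤ MeasurableSpace.comap W (inferInstance : MeasurableSpace 𝒲) := by
    rw [show (fun ω => T (W ω)) = T ∘ W from rfl, ← MeasurableSpace.comap_comp]
    exact MeasurableSpace.comap_mono hT.comap_le
  have hq₀'m : Measurable (fun x => max 0 (min 1 (q₀ x))) :=
    measurable_const.max (measurable_const.min hq₀m)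
  have hQ₀'range : ∀ ω, max 0 (min 1 (q₀ (T (W ω)))) ∈ Set.Icc (0:ℝ) 1 := fun ω =>
    ⟨le_max_left _ _, max_le zero_le_one (min_le_left _ _)⟩
  have hQ₀'ae : (fun ω => max 0 (min 1 (q₀ (T (W ω))))) =ᵐ[P] Q₀ := by
    filter_upwards [hq₀eq] with ω hω
    have h1 := (hQ₀range ω).1
    have h2 := (hQ₀range ω).2
    rw [← hω, min_eq_right h2, max_eq_right h1]
  have hTWm : Measurable[MeasurableSpace.comap (fun ω => T (W ω)) inferInstance]
      (fun ω => T (W ω)) := Measurable.of_comap_le le_rfl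
  have hQ₀'measm : Measurable[MeasurableSpace.comap (fun ω => T (W ω)) inferInstance]
      (fun ω => max 0 (min 1 (q₀ (T (W ω))))) := hq₀'m.comp hTWm
  have key := aux_dr P (MeasurableSpace.comap (fun ω => T (W ω)) inferInstance) hm
    A Y Q₀ QT (fun ω => max 0 (min 1 (q₀ (T (W ω))))) GT
    hA hY hAbin hYrange hQ₀range hQTrange hQ₀'measm hQ₀'range hQ₀'ae
    (hQ₀meas.mono hW.comap_le le_rfl)
    hQTmeas
    (fun f hf hb => hQ₀orth f (hf.mono hmW le_rfl) hb)
    hQTorth hGT δ hδ.1 hGTpos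
  exact ⟨key, integral_congr_ae key⟩
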